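/- The increase in price due to higher targeting precision is positively moderated by the click-through rate of the more-prominent position: given t > 0, 0 < v < 2t, 0 ≤ β ≤ 1, and 0 < δ < α < 1, the partial derivative with respect to α of g(α, δ, β) = (α−δ)·(α(2−δ)t + δ(2t−αv)) / (2(α+δ) − 3αδ − 2β(α−δ))² is strictly positive. -/

import Mathlib

/-- The increase in price due to higher targeting precision is positively
moderated by α: the partial derivative with respect to α of
g(α,δ,β) = (α−δ)(α(2−δ)t + δ(2t−αv)) / (2(α+δ) − 3αδ − 2β(α−δ))² is strictly positive. -/
theorem stmt_6 (t v α δ β : ℝ) (ht : 0 < t) (hv0 : 0 < v) (hv2 : v < 2 * t)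
    (hβ0 : 0 ≤ β) (hβ1 : β ≤ 1) (hδ : 0 < δ) (hδα : δ < α) (hα : α < 1) :
    0 < deriv (fun a : ℝ =>
      (a - δ) * (a * (2 - δ) * t + δ * (2 * t - a * v)) /
        (2 * (a + δ) - 3 * a * δ - 2 * β * (a - δ)) ^ 2) α := by
  have hδα' : (0:ℝ) < α - δ := by linarith
  have hD : 0 < 2 * (α + δ) - 3 * α * δ - 2 * β * (α - δ) := by
    nlinarith [mul_nonneg (sub_nonneg.2 hβ1) hδα'.le,
      mul_pos hδ (by linarith : (0:ℝ) < 4 - 3 * α)]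
  -- B < 0
  have hB : 2*δ*(1+β) - 2*α*(3+β) + 3*α*δ < 0 := by
    nlinarith [mul_nonneg hδα'.le (by linarith : (0:ℝ) ≤ 1 + β),
      mul_pos (by linarith : (0:ℝ) < α) (by linarith : (0:ℝ) < 4 - 3*δ)]
  -- H > 0 (G at β = 0)
  have hH : 0 < 8*δ + 8*α - 6*δ^2 - 18*α*δ + 9*α*δ^2 := by
    nlinarith [mul_pos (mul_pos hδα' (by linarith : (0:ℝ) < 4 - 3*δ))
        (by linarith : (0:ℝ) < 2 - δ),
      mul_nonneg (mul_nonneg (by linarith : (0:ℝ) ≤ 1 - α) hδ.le) (sq_nonneg (3*δ - 4)),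
      (by linarith : (0:ℝ) < 1 - δ)]
  -- G > 0
  have hG : 0 < 8*δ - 8*β*δ + 8*α + 8*α*β - 6*δ^2 + 6*β*δ^2 - 18*α*δ - 6*α*β*δ + 9*α*δ^2 := by
    nlinarith [hH, mul_nonneg (mul_nonneg hβ0 hδα'.le) (by linarith : (0:ℝ) ≤ 8 - 6*δ)]
  -- F > 0
  have hF : 0 < 8*δ*t - 8*β*δ*t + 2*δ^2*v - 10*δ^2*t + 2*β*δ^2*v + 2*β*δ^2*t
      + 8*α*t + 8*α*β*t - 6*α*δ*v - 6*α*δ*t - 2*α*β*δ*v - 2*α*β*δ*t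
      + 3*α*δ^2*v + 3*α*δ^2*t := by
    nlinarith [mul_pos ht hG,
      mul_pos (mul_pos hδ (by linarith : (0:ℝ) < -(2*δ*(1+β) - 2*α*(3+β) + 3*α*δ)))
        (by linarith : (0:ℝ) < 2*t - v)]
  have hE : 0 < δ * (8*δ*t - 8*β*δ*t + 2*δ^2*v - 10*δ^2*t + 2*β*δ^2*v + 2*β*δ^2*t
      + 8*α*t + 8*α*β*t - 6*α*δ*v - 6*α*δ*t - 2*α*β*δ*v - 2*α*β*δ*t
      + 3*α*δ^2*v + 3*α*δ^2*t) := mul_pos hδ hF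
  -- compute the derivative
  have h1 : HasDerivAt (fun a : ℝ => (a - δ) * (a * (2 - δ) * t + δ * (2 * t - a * v)))
      (1 * (α * (2 - δ) * t + δ * (2 * t - α * v)) + (α - δ) * ((2 - δ) * t + δ * (-v))) α := by
    have ha : HasDerivAt (fun a : ℝ => a - δ) 1 α := (hasDerivAt_id α).sub_const δ
    have hb1 : HasDerivAt (fun a : ℝ => a * (2 - δ) * t) ((2 - δ) * t) α := by
      simpa [mul_assoc] using (hasDerivAt_id α).mul_const ((2 - δ) * t)
    have hb2 : HasDerivAt (fun a : ℝ => δ * (2 * t - a * v)) (δ * (-v)) α := by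
      have h := (((hasDerivAt_id α).mul_const v).const_sub (2 * t)).const_mul δ
      simpa using h
    exact ha.mul (hb1.add hb2)
  have hin : HasDerivAt (fun a : ℝ => 2 * (a + δ) - 3 * a * δ - 2 * β * (a - δ))
      (2 * 1 - 3 * δ - 2 * β * 1) α := by
    have h2a : HasDerivAt (fun a : ℝ => 2 * (a + δ)) (2 * 1) α :=
      ((hasDerivAt_id α).add_const δ).const_mul 2
    have h2b' : HasDerivAt (fun a : ℝ => 3 * a * δ) (3 * δ) α := by
      have := ((hasDerivAt_id α).const_mul 3).mul_const δ
      simpa using this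
    have h2c : HasDerivAt (fun a : ℝ => 2 * β * (a - δ)) (2 * β * 1) α :=
      ((hasDerivAt_id α).sub_const δ).const_mul (2 * β)
    exact (h2a.sub h2b').sub h2c
  have h2 := hin.pow 2
  have hDne : (fun a : ℝ => (2 * (a + δ) - 3 * a * δ - 2 * β * (a - δ)) ^ 2) α ≠ 0 :=
    pow_ne_zero _ (ne_of_gt hD)
  have hder := h1.div h2 hDne
  rw [show (fun a : ℝ => (a - δ) * (a * (2 - δ) * t + δ * (2 * t - a * v)) / (2 * (a + δ) - 3 * a * δ - 2 * β * (a - δ)) ^ 2) = (fun a : ℝ => (a - δ) * (a * (2 - δ) * t + δ * (2 * t - a * v))) / (fun a : ℝ => 2 * (a + δ) - 3 * a * δ - 2 * β * (a - δ)) ^ 2 from rfl, hder.deriv]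
  apply div_pos
  · norm_num only [Pi.pow_apply]
    nlinarith [mul_pos hD hE]
  · exact pow_pos (pow_pos hD 2) 2
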